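/- Let $\lambda_1, \dots, \lambda_N$ be distinct real numbers and $\alpha_1, \dots, \alpha_N$ real numbers. Define the polynomial $p_0(\lambda) = \prod_{k=1}^{N}(\lambda - \lambda_k) - \sum_{j=1}^{N} \alpha_j \prod_{k \ne j}(\lambda - \lambda_k)$. Then its derivative satisfies $p_0'(\lambda) = \sum_{j=1}^{N} \mu_j \prod_{k \ne j}(\lambda - \lambda_k)$, where $\mu_j = 1 - \sum_{i \ne j} \frac{\alpha_i + \alpha_j}{\lambda_j - \lambda_i}$. Equivalently, for $\lambda \notin \{\lambda_1, \dots, \lambda_N\}$, $p_0'(\lambda) = \Big[\sum_{j=1}^{N} \frac{\mu_j}{\lambda - \lambda_j}\Big] \prod_{k=1}^{N}(\lambda - \lambda_k)$. -/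

import Mathlib

open Finset

lemma key_pt {N : ℕ} (lam : Fin N → ℝ) (hlam : Function.Injective lam)
    (x : ℝ) {i j : Fin N} (hij : i ≠ j) :
    (∏ k ∈ (univ.erase j).erase i, (x - lam k)) =
      (∏ k ∈ univ.erase j, (x - lam k)) / (lam j - lam i)
      + (∏ k ∈ univ.erase i, (x - lam k)) / (lam i - lam j) := by
  have hne : lam j ≠ lam i := fun h => hij (hlam h).symm
  have h1 : (∏ k ∈ univ.erase j, (x - lam k)) =
      (x - lam i) * ∏ k ∈ (univ.erase j).erase i, (x - lam k) := by
    rw [← Finset.mul_prod_erase (univ.erase j) (fun k => x - lam k)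
      (show i ∈ univ.erase j by simp [hij])]
  have h2 : (∏ k ∈ univ.erase i, (x - lam k)) =
      (x - lam j) * ∏ k ∈ (univ.erase j).erase i, (x - lam k) := by
    rw [Finset.erase_right_comm,
      ← Finset.mul_prod_erase (univ.erase i) (fun k => x - lam k)
        (show j ∈ univ.erase i by simp [hij.symm])]
  have ha : lam j - lam i ≠ 0 := sub_ne_zero.mpr hne
  have hb : lam i - lam j ≠ 0 := sub_ne_zero.mpr hne.symm
  rw [h1, h2]
  field_simp
  ring

theorem secular_polynomial_deriv (N : ℕ) (lam α : Fin N → ℝ)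
    (hlam : Function.Injective lam) :
    (∀ x : ℝ,
        HasDerivAt
          (fun t => ∏ k, (t - lam k) - ∑ j, α j * ∏ k ∈ univ.erase j, (t - lam k))
          (∑ j, (1 - ∑ i ∈ univ.erase j, (α i + α j) / (lam j - lam i)) *
            ∏ k ∈ univ.erase j, (x - lam k)) x) ∧
      ∀ x : ℝ, (∀ j, x ≠ lam j) →
        (∑ j, (1 - ∑ i ∈ univ.erase j, (α i + α j) / (lam j - lam i)) *
            ∏ k ∈ univ.erase j, (x - lam k)) =
          (∑ j, (1 - ∑ i ∈ univ.erase j, (α i + α j) / (lam j - lam i)) / (x - lam j)) *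
            ∏ k, (x - lam k) := by
  constructor
  · intro x
    -- derivative of the product
    have hprod : ∀ (s : Finset (Fin N)), HasDerivAt (fun t => ∏ k ∈ s, (t - lam k))
        (∑ i ∈ s, ∏ k ∈ s.erase i, (x - lam k)) x := by
      intro s
      have := HasDerivAt.fun_finsetProd (u := s) (f := fun k t => t - lam k)
        (f' := fun _ => (1 : ℝ)) (x := x)
        (fun i _ => (hasDerivAt_id x).sub_const (lam i))
      simpa using this
    have hsum : HasDerivAt (fun t => ∑ j, α j * ∏ k ∈ univ.erase j, (t - lam k))
        (∑ j, α j * ∑ i ∈ univ.erase j, ∏ k ∈ (univ.erase j).erase i, (x - lam k)) x :=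
      HasDerivAt.fun_sum fun j _ => (hprod (univ.erase j)).const_mul (α j)
    have h := (hprod univ).fun_sub hsum
    refine h.congr_deriv (Eq.symm ?_)
    -- algebraic identity
    have swap : ∑ j, ∑ i ∈ univ.erase j, α i / (lam j - lam i) * ∏ k ∈ univ.erase j, (x - lam k)
        = ∑ j, ∑ i ∈ univ.erase j, α j / (lam i - lam j) * ∏ k ∈ univ.erase i, (x - lam k) := by
      rw [Finset.sum_comm' (s' := fun i => univ.erase i) (t' := univ)
        (by intro a b; simp [eq_comm, ne_comm])]
    have expand : ∀ j : Fin N,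
        (1 - ∑ i ∈ univ.erase j, (α i + α j) / (lam j - lam i)) *
          ∏ k ∈ univ.erase j, (x - lam k)
        = ∏ k ∈ univ.erase j, (x - lam k)
          - (∑ i ∈ univ.erase j, α i / (lam j - lam i) * ∏ k ∈ univ.erase j, (x - lam k)
            + ∑ i ∈ univ.erase j, α j / (lam j - lam i) * ∏ k ∈ univ.erase j, (x - lam k)) := by
      intro j
      rw [sub_mul, one_mul]
      congr 1
      rw [Finset.sum_mul, ← Finset.sum_add_distrib]
      exact Finset.sum_congr rfl fun i _ => by ring
    simp only [expand, Finset.sum_sub_distrib, Finset.sum_add_distrib]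
    rw [swap]
    congr 1
    rw [← Finset.sum_add_distrib]
    apply Finset.sum_congr rfl
    intro j _
    rw [Finset.mul_sum, ← Finset.sum_add_distrib]
    apply Finset.sum_congr rfl
    intro i hi
    have hij : i ≠ j := Finset.ne_of_mem_erase hi
    rw [key_pt lam hlam x hij]
    ring
  · intro x hx
    rw [Finset.sum_mul]
    apply Finset.sum_congr rfl
    intro j _
    have h : (∏ k, (x - lam k)) = (x - lam j) * ∏ k ∈ univ.erase j, (x - lam k) :=
      (Finset.mul_prod_erase univ _ (mem_univ j)).symm
    rw [h]
    have : x - lam j ≠ 0 := sub_ne_zero.mpr (hx j)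
    field_simp
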